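/- Let A, B ∈ M_n(ℂ), and let A = S + N be a Jordan–Chevalley decomposition of A (S diagonalizable, N nilpotent, SN = NS). If ad_A^k(B) = 0 for some integer k > 0, where ad_A(X) = AX − XA, then [S, B] = 0. -/

import Mathlib

/-- A complex square matrix is diagonalizable (semisimple) if it is conjugate to a
diagonal matrix. -/
def Matrix.IsDiagonalizable {n : ℕ} (A : Matrix (Fin n) (Fin n) ℂ) : Prop :=
  ∃ P : Matrix (Fin n) (Fin n) ℂ, IsUnit P ∧ (P * A * P⁻¹).IsDiag

/-- If `A = S + N` is a Jordan–Chevalley decomposition of `A` and `ad_A^k(B) = 0` for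
some `k > 0`, then `[S, B] = 0`. -/
theorem lie_semisimplePart_eq_zero_of_ad_pow_eq_zero {n : ℕ}
    (A B S N : Matrix (Fin n) (Fin n) ℂ)
    (hA : A = S + N) (hS : S.IsDiagonalizable) (hN : IsNilpotent N)
    (hSN : S * N = N * S) (k : ℕ) (hk : 0 < k)
    (h : (fun X => ⁅A, X⁆)^[k] B = 0) :
    ⁅S, B⁆ = 0 := by
  classical
  obtain ⟨P, hP, hdiag⟩ := hS
  have hPd := (Matrix.isUnit_iff_isUnit_det P).mp hP
  have h1 : P * P⁻¹ = 1 := Matrix.mul_nonsing_inv P hPd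
  have h2 : P⁻¹ * P = 1 := Matrix.nonsing_inv_mul P hPd
  set D := P * S * P⁻¹ with hD
  set N' := P * N * P⁻¹ with hN'
  set C := P * B * P⁻¹ with hC
  set A' := P * A * P⁻¹ with hA'
  -- conjugation is multiplicative
  have hconj : ∀ X Y : Matrix (Fin n) (Fin n) ℂ,
      P * (X * Y) * P⁻¹ = (P * X * P⁻¹) * (P * Y * P⁻¹) := by
    intro X Y
    have e : (P * X * P⁻¹) * (P * Y * P⁻¹) = P * X * (P⁻¹ * P) * Y * P⁻¹ := by
      simp only [mul_assoc]
    rw [e, h2, mul_one, mul_assoc P X Y]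
  have hbr : ∀ X Y : Matrix (Fin n) (Fin n) ℂ,
      P * (X * Y - Y * X) * P⁻¹
        = (P * X * P⁻¹) * (P * Y * P⁻¹) - (P * Y * P⁻¹) * (P * X * P⁻¹) := by
    intro X Y
    rw [mul_sub, sub_mul, hconj, hconj]
  -- transport the hypothesis
  have hiter : ∀ m : ℕ,
      P * ((fun X => ⁅A, X⁆)^[m] B) * P⁻¹ = (fun X => ⁅A', X⁆)^[m] C := by
    intro m
    induction m with
    | zero => simp only [Function.iterate_zero, id_eq]; exact hC.symm
    | succ m ih =>
      rw [Function.iterate_succ_apply', Function.iterate_succ_apply', ← ih]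
      simp only [Ring.lie_def]
      rw [hbr, hA']
  have hzero : (fun X => ⁅A', X⁆)^[k] C = 0 := by
    rw [← hiter, h, mul_zero, zero_mul]
  have hDd : ∀ i j : Fin n, i ≠ j → D i j = 0 := fun i j hij => hdiag hij
  have hDN : D * N' = N' * D := by
    rw [hD, hN', ← hconj, ← hconj, hSN]
  have hconjpow : ∀ (X : Matrix (Fin n) (Fin n) ℂ) (m : ℕ),
      (P * X * P⁻¹) ^ m = P * X ^ m * P⁻¹ := by
    intro X m
    induction m with
    | zero => simp [h1]
    | succ m ih => rw [pow_succ, pow_succ, ih, ← hconj]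
  have hN'nil : IsNilpotent N' := by
    obtain ⟨r, hr⟩ := hN
    exact ⟨r, by rw [hN', hconjpow, hr, mul_zero, zero_mul]⟩
  -- block structure of N'
  have hNd : ∀ i m : Fin n, D i i ≠ D m m → N' i m = 0 := by
    intro i m hne
    have e := congrFun (congrFun hDN i) m
    rw [Matrix.mul_apply, Matrix.mul_apply,
      Finset.sum_eq_single i (fun l _ hl => by rw [hDd i l (Ne.symm hl), zero_mul])
        (by simp),
      Finset.sum_eq_single m (fun l _ hl => by rw [hDd l m hl, mul_zero])
        (by simp)] at e
    have e2 : (D i i - D m m) * N' i m = 0 := by linear_combination e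
    rcases mul_eq_zero.mp e2 with h' | h'
    · exact absurd (sub_eq_zero.mp h') hne
    · exact h'
  have hA'sum : A' = D + N' := by
    rw [hA', hA, mul_add, add_mul]
  have hA'd : ∀ i m : Fin n, D i i ≠ D m m → A' i m = 0 := by
    intro i m hne
    have him : i ≠ m := fun e => hne (by rw [e])
    rw [hA'sum]
    show D i m + N' i m = 0
    rw [hDd i m him, hNd i m hne, add_zero]
  -- main claim
  have key : ∀ i j : Fin n, D i i ≠ D j j → C i j = 0 := by
    intro i₀ j₀ hne
    set lam := D i₀ i₀ - D j₀ j₀ with hlamdef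
    have hlam : lam ≠ 0 := sub_ne_zero.mpr hne
    let π : Matrix (Fin n) (Fin n) ℂ → Matrix (Fin n) (Fin n) ℂ :=
      fun X => Matrix.of fun i j => if D i i - D j j = lam then X i j else 0
    have hπE : ∀ X i j, D i i - D j j ≠ lam → π X i j = 0 := by
      intro X i j hij
      simp only [π, Matrix.of_apply, if_neg hij]
    -- π commutes with ad A'
    have hπA : ∀ X, π ⁅A', X⁆ = ⁅A', π X⁆ := by
      intro X
      ext i j
      simp only [Ring.lie_def, π, Matrix.of_apply, Matrix.sub_apply, Matrix.mul_apply]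
      by_cases hij : D i i - D j j = lam
      · rw [if_pos hij]
        congr 1
        · refine Finset.sum_congr rfl fun m _ => ?_
          by_cases hm : D m m - D j j = lam
          · rw [if_pos hm]
          · have hd : D i i ≠ D m m := fun e => hm (by rw [← e]; exact hij)
            rw [if_neg hm, hA'd i m hd, zero_mul, zero_mul]
        · refine Finset.sum_congr rfl fun m _ => ?_
          by_cases hm : D i i - D m m = lam
          · rw [if_pos hm]
          · have hd : D m m ≠ D j j := fun e => hm (by rw [e]; exact hij)
            rw [if_neg hm, hA'd m j hd, mul_zero, zero_mul]
      · rw [if_neg hij]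
        have t1 : ∀ m ∈ Finset.univ,
            A' i m * (if D m m - D j j = lam then X m j else 0) = 0 := by
          intro m _
          by_cases hm : D m m - D j j = lam
          · have hd : D i i ≠ D m m := fun e => hij (by rw [e]; exact hm)
            rw [hA'd i m hd, zero_mul]
          · rw [if_neg hm, mul_zero]
        have t2 : ∀ m ∈ Finset.univ,
            (if D i i - D m m = lam then X i m else 0) * A' m j = 0 := by
          intro m _
          by_cases hm : D i i - D m m = lam
          · have hd : D m m ≠ D j j := fun e => hij (by rw [← e]; exact hm)
            rw [hA'd m j hd, mul_zero]
          · rw [if_neg hm, zero_mul]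
        rw [Finset.sum_congr rfl t1, Finset.sum_congr rfl t2]
        simp
    have hπiter : ∀ m : ℕ,
        π ((fun X => ⁅A', X⁆)^[m] C) = (fun X => ⁅A', X⁆)^[m] (π C) := by
      intro m
      induction m with
      | zero => rfl
      | succ m ih =>
        rw [Function.iterate_succ_apply', Function.iterate_succ_apply', ← ih]
        exact hπA _
    -- the operator lam • 1 + ad N'
    letI : LieRing (Matrix (Fin n) (Fin n) ℂ) := LieRing.ofAssociativeRing
    set adN : Module.End ℂ (Matrix (Fin n) (Fin n) ℂ) :=
      LieAlgebra.ad ℂ (Matrix (Fin n) (Fin n) ℂ) N' with hadN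
    have hadNapply : ∀ X, adN X = N' * X - X * N' := fun X => rfl
    have hEadN : ∀ X, (∀ i j, D i i - D j j ≠ lam → X i j = 0) →
        ∀ i j, D i i - D j j ≠ lam → adN X i j = 0 := by
      intro X hX i j hij
      rw [hadNapply]
      simp only [Matrix.sub_apply, Matrix.mul_apply]
      have s1 : ∑ m, N' i m * X m j = 0 := Finset.sum_eq_zero (by
        intro m _
        by_cases hm : D i i = D m m
        · rw [hX m j (fun e => hij (by rw [hm]; exact e)), mul_zero]
        · rw [hNd i m hm, zero_mul])
      have s2 : ∑ m, X i m * N' m j = 0 := Finset.sum_eq_zero (by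
        intro m _
        by_cases hm : D m m = D j j
        · rw [hX i m (fun e => hij (by rw [← hm]; exact e)), zero_mul]
        · rw [hNd m j hm, mul_zero])
      rw [s1, s2, sub_zero]
    have hDX : ∀ X, (∀ i j, D i i - D j j ≠ lam → X i j = 0) →
        (⁅D, X⁆ : Matrix (Fin n) (Fin n) ℂ) = lam • X := by
      intro X hX
      ext i j
      simp only [Ring.lie_def, Matrix.sub_apply, Matrix.mul_apply, Matrix.smul_apply,
        smul_eq_mul]
      rw [Finset.sum_eq_single i (fun l _ hl => by rw [hDd i l (Ne.symm hl), zero_mul])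
          (by simp),
        Finset.sum_eq_single j (fun l _ hl => by rw [hDd l j hl, mul_zero]) (by simp)]
      by_cases hij : D i i - D j j = lam
      · linear_combination X i j * hij
      · rw [hX i j hij]
        ring
    set T : Module.End ℂ (Matrix (Fin n) (Fin n) ℂ) := lam • 1 + adN with hT
    have hTapply : ∀ X, T X = lam • X + adN X := by
      intro X
      rw [hT]
      simp
    have hTE : ∀ X, (∀ i j, D i i - D j j ≠ lam → X i j = 0) →
        ⁅A', X⁆ = T X ∧ ∀ i j, D i i - D j j ≠ lam → T X i j = 0 := by
      intro X hX
      have e1 : ⁅A', X⁆ = lam • X + adN X := by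
        rw [hA'sum, add_lie, hDX X hX, hadNapply]
        rfl
      refine ⟨by rw [e1, hTapply], ?_⟩
      intro i j hij
      rw [hTapply]
      simp only [Matrix.add_apply, Matrix.smul_apply, smul_eq_mul, hX i j hij,
        hEadN X hX i j hij, mul_zero, add_zero]
    have hTiter : ∀ m : ℕ,
        (fun X => ⁅A', X⁆)^[m] (π C) = (T ^ m) (π C) ∧
          ∀ i j, D i i - D j j ≠ lam → ((T ^ m) (π C)) i j = 0 := by
      intro m
      induction m with
      | zero => simpa using hπE C
      | succ m ih =>
        obtain ⟨e, hEm⟩ := ih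
        obtain ⟨e2, hE2⟩ := hTE _ hEm
        have epow : T ^ (m + 1) = T * T ^ m := pow_succ' T m
        constructor
        · rw [Function.iterate_succ_apply', e, e2, epow, Module.End.mul_apply]
        · rw [epow, Module.End.mul_apply]
          exact hE2
    have hπC0 : (T ^ k) (π C) = 0 := by
      rw [← (hTiter k).1, ← hπiter, hzero]
      ext i j
      simp [π]
    have hadNnil : IsNilpotent adN :=
      LieAlgebra.ad_nilpotent_of_nilpotent (R := ℂ) hN'nil
    have hTu : IsUnit T := by
      have hc : Commute adN (lam • (1 : Module.End ℂ (Matrix (Fin n) (Fin n) ℂ))) :=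
        (Commute.one_right adN).smul_right lam
      have hu : IsUnit (lam • (1 : Module.End ℂ (Matrix (Fin n) (Fin n) ℂ))) := by
        rw [← Algebra.algebraMap_eq_smul_one]
        exact (isUnit_iff_ne_zero.mpr hlam).map (algebraMap ℂ _)
      exact hadNnil.isUnit_add_left_of_commute hu hc
    have hinj : Function.Injective (T ^ k : Module.End ℂ (Matrix (Fin n) (Fin n) ℂ)) :=
      ((Module.End.isUnit_iff _).mp (hTu.pow k)).injective
    have hπC : π C = 0 := hinj (by rw [hπC0, map_zero])
    have e := congrFun (congrFun hπC i₀) j₀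
    simpa [π, ← hlamdef] using e
  -- conclude
  have hDC : D * C - C * D = 0 := by
    ext i j
    simp only [Matrix.sub_apply, Matrix.mul_apply, Matrix.zero_apply]
    rw [Finset.sum_eq_single i (fun l _ hl => by rw [hDd i l (Ne.symm hl), zero_mul])
        (by simp),
      Finset.sum_eq_single j (fun l _ hl => by rw [hDd l j hl, mul_zero]) (by simp)]
    by_cases hij : D i i = D j j
    · rw [hij]
      ring
    · rw [key i j hij]
      ring
  have hPSB : P * ⁅S, B⁆ * P⁻¹ = 0 := by
    rw [Ring.lie_def, hbr, ← hD, ← hC]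
    exact hDC
  have cancel : ∀ X : Matrix (Fin n) (Fin n) ℂ, P⁻¹ * (P * X * P⁻¹) * P = X := by
    intro X
    have e : P⁻¹ * (P * X * P⁻¹) * P = (P⁻¹ * P) * X * (P⁻¹ * P) := by
      simp only [mul_assoc]
    rw [e, h2, one_mul, mul_one]
  calc ⁅S, B⁆ = P⁻¹ * (P * ⁅S, B⁆ * P⁻¹) * P := (cancel _).symm
    _ = 0 := by rw [hPSB, mul_zero, zero_mul]
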